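/- For natural numbers 1 ≤ k ≤ n and every real number p, the following identity holds: ∑_{c=0}^{n} C(n, c) · p^c · (1−p)^{n−c} · (1 − C(n−c, k)/C(n, k)) = 1 − (1−p)^k. -/

import Mathlib

lemma choose_aux (m k c : ℕ) (hc : c ≤ m) :
    (m + k).choose c * (m + k - c).choose k = (m + k).choose k * m.choose c := by
  have h1 := Nat.choose_mul (n := m + k) (k := c + k) (s := c)
    (by omega)
  have h2 := Nat.choose_mul (n := m + k) (k := c + k) (s := k)
    (by omega)
  simp only [Nat.add_sub_cancel, Nat.add_sub_cancel_left] at h1 h2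
  rw [← h1, Nat.choose_symm_add, h2]

lemma choose_aux' (m k c : ℕ) (hk : 1 ≤ k) :
    (m + k).choose c * (m + k - c).choose k = (m + k).choose k * m.choose c := by
  rcases le_or_gt c m with h | h
  · exact choose_aux m k c h
  · rw [Nat.choose_eq_zero_of_lt (by omega : m + k - c < k),
      Nat.choose_eq_zero_of_lt h, mul_zero, mul_zero]

/-- For natural numbers 1 ≤ k ≤ n and every real number p,
∑_{c=0}^{n} C(n, c) · p^c · (1−p)^{n−c} · (1 − C(n−c, k)/C(n, k)) = 1 − (1−p)^k. -/
theorem binomial_expectation_rho_eq_passk (n k : ℕ) (hk : 1 ≤ k) (hkn : k ≤ n) (p : ℝ) :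
    ∑ c ∈ Finset.range (n + 1),
        (n.choose c : ℝ) * p ^ c * (1 - p) ^ (n - c) *
          (1 - ((n - c).choose k : ℝ) / (n.choose k : ℝ))
      = 1 - (1 - p) ^ k := by
  obtain ⟨m, rfl⟩ : ∃ m, n = m + k := ⟨n - k, by omega⟩
  have hch : ((m + k).choose k : ℝ) ≠ 0 := by
    exact_mod_cast Nat.choose_pos (by omega : k ≤ m + k) |>.ne'
  have hterm : ∀ c ∈ Finset.range (m + k + 1),
      ((m + k).choose c : ℝ) * p ^ c * (1 - p) ^ (m + k - c) *
          (1 - ((m + k - c).choose k : ℝ) / ((m + k).choose k : ℝ))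
        = ((m + k).choose c : ℝ) * p ^ c * (1 - p) ^ (m + k - c)
          - (m.choose c : ℝ) * p ^ c * (1 - p) ^ (m + k - c) := by
    intro c _
    have key : ((m + k).choose c : ℝ) * ((m + k - c).choose k : ℝ)
        = ((m + k).choose k : ℝ) * (m.choose c : ℝ) := by
      exact_mod_cast congrArg (Nat.cast : ℕ → ℝ) (choose_aux' m k c hk)
    have h3 : ((m + k).choose c : ℝ) * p ^ c * (1 - p) ^ (m + k - c) *
        (((m + k - c).choose k : ℝ) / ((m + k).choose k : ℝ))
        = (m.choose c : ℝ) * p ^ c * (1 - p) ^ (m + k - c) := by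
      field_simp
      linear_combination (p ^ c * (1 - p) ^ (m + k - c)) * key
    rw [mul_sub, mul_one, h3]
  rw [Finset.sum_congr rfl hterm, Finset.sum_sub_distrib]
  have h1 : ∑ c ∈ Finset.range (m + k + 1),
      ((m + k).choose c : ℝ) * p ^ c * (1 - p) ^ (m + k - c) = 1 := by
    have := add_pow p (1 - p) (m + k)
    simp only [add_sub_cancel, one_pow] at this
    rw [← this] at *
    · calc ∑ c ∈ Finset.range (m + k + 1),
          ((m + k).choose c : ℝ) * p ^ c * (1 - p) ^ (m + k - c)
          = ∑ c ∈ Finset.range (m + k + 1),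
            p ^ c * (1 - p) ^ (m + k - c) * ((m + k).choose c : ℝ) := by
            apply Finset.sum_congr rfl; intro c _; ring
        _ = (p + (1 - p)) ^ (m + k) := (add_pow p (1 - p) (m + k)).symm
        _ = 1 := by norm_num
  have h2 : ∑ c ∈ Finset.range (m + k + 1),
      (m.choose c : ℝ) * p ^ c * (1 - p) ^ (m + k - c) = (1 - p) ^ k := by
    rw [← Finset.sum_subset (Finset.range_subset_range.mpr (by omega : m + 1 ≤ m + k + 1))]
    · calc ∑ c ∈ Finset.range (m + 1),
          (m.choose c : ℝ) * p ^ c * (1 - p) ^ (m + k - c)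
          = ∑ c ∈ Finset.range (m + 1),
            (p ^ c * (1 - p) ^ (m - c) * (m.choose c : ℝ)) * (1 - p) ^ k := by
            apply Finset.sum_congr rfl
            intro c hc
            rw [Finset.mem_range] at hc
            have h4 : m + k - c = (m - c) + k := by omega
            rw [h4, pow_add]; ring
        _ = (p + (1 - p)) ^ m * (1 - p) ^ k := by
            rw [← Finset.sum_mul, ← add_pow]
        _ = (1 - p) ^ k := by norm_num
    · intro c hc hcn
      rw [Finset.mem_range, not_lt] at hcn
      rw [Nat.choose_eq_zero_of_lt (by omega)]
      norm_num
  rw [h1, h2]
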